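/- Simplex-PI terminates after at most n(m−1)⌈(n/(1−γ)) log(n/(1−γ))⌉ iterations: if π_0, π_1, …, π_K is a sequence of policies generated by Simplex-PI such that π_k is not optimal for every k < K, then K ≤ n(m−1)⌈(n/(1−γ)) log(n/(1−γ))⌉. -/

import Mathlib

open Matrix BigOperators

/-- A finite discounted MDP with `n ≥ 1` states and `m ≥ 2` actions:
transition probabilities `p i a j`, rewards `r i a j`, discount factor `γ ∈ (0,1)`. -/
structure MDP (n m : ℕ) : Type where
  n_pos : 1 ≤ n
  m_ge_two : 2 ≤ m
  p : Fin n → Fin m → Fin n → ℝ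
  r : Fin n → Fin m → Fin n → ℝ
  γ : ℝ
  p_nonneg : ∀ i a j, 0 ≤ p i a j
  p_sum : ∀ i a, ∑ j, p i a j = 1
  γ_pos : 0 < γ
  γ_lt_one : γ < 1

/-- A (stationary deterministic) policy. -/
abbrev MDP.Policy (n m : ℕ) : Type := Fin n → Fin m

namespace MDP

variable {n m : ℕ}

/-- The row-stochastic transition matrix `P_π` of a policy. -/
def P (M : MDP n m) (π : Policy n m) : Matrix (Fin n) (Fin n) ℝ :=
  Matrix.of fun i j => M.p i (π i) j

/-- The expected reward vector `r_π` of a policy. -/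
def rPol (M : MDP n m) (π : Policy n m) : Fin n → ℝ :=
  fun i => ∑ j, M.p i (π i) j * M.r i (π i) j

/-- The Bellman operator `T_π v = r_π + γ P_π v` of a policy. -/
def Tpol (M : MDP n m) (π : Policy n m) (v : Fin n → ℝ) : Fin n → ℝ :=
  fun i => M.rPol π i + M.γ * (M.P π *ᵥ v) i

/-- `IsValue M V` asserts that, for every policy `π`, `V π` is the value function `v_π`,
i.e. the (unique) solution of the Bellman equation `v_π = T_π v_π`. -/
def IsValue (M : MDP n m) (V : Policy n m → Fin n → ℝ) : Prop :=
  ∀ π, V π = M.Tpol π (V π)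

/-- The optimal Bellman operator `T v = max_π T_π v` (componentwise maximum). -/
noncomputable def T (M : MDP n m) (v : Fin n → ℝ) : Fin n → ℝ :=
  fun i => ⨆ π : Policy n m, M.Tpol π v i

/-- The optimal value function `v_*`, the componentwise maximum of `v_π` over policies. -/
noncomputable def vStar (M : MDP n m) (V : Policy n m → Fin n → ℝ) : Fin n → ℝ :=
  fun i => ⨆ π : Policy n m, V π i

/-- A policy is optimal when its value equals `v_*`. -/
def IsOptimal (M : MDP n m) (V : Policy n m → Fin n → ℝ) (π : Policy n m) : Prop :=
  V π = M.vStar V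

/-- `π'` is greedy with respect to `v_π`: `T_{π'} v_π = T v_π`.  One step of Howard's PI
from a non-optimal `π` moves to such a `π'`. -/
def Greedy (M : MDP n m) (V : Policy n m → Fin n → ℝ) (π π' : Policy n m) : Prop :=
  M.Tpol π' (V π) = M.T (V π)

/-- One step of Simplex-PI: `π'` agrees with `π` except at a single state `s` maximizing
the advantage `a_π(i) = (T v_π - v_π)(i)`, where `π'(s)` achieves `T v_π(s)`. -/
def SimplexStep (M : MDP n m) (V : Policy n m → Fin n → ℝ) (π π' : Policy n m) : Prop :=
  ∃ s : Fin n, (∀ i, i ≠ s → π' i = π i) ∧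
    (∀ i, M.T (V π) i - V π i ≤ M.T (V π) s - V π s) ∧
    M.Tpol π' (V π) s = M.T (V π) s

/-- The vector `x_π = (I - γ P_πᵀ)⁻¹ 1`. -/
noncomputable def xPol (M : MDP n m) (π : Policy n m) : Fin n → ℝ :=
  ((1 : Matrix (Fin n) (Fin n) ℝ) - M.γ • (M.P π)ᵀ)⁻¹ *ᵥ (fun _ => (1 : ℝ))

/-- `R` is a recurrent class of `π`: nonempty, closed under positive-probability
transitions of `P_π`, and every state of `R` is reachable from every other state of `R`
along positive-probability transitions.  (For a deterministic MDP this is the notion of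
a cycle of `π`.) -/
def IsRecClass (M : MDP n m) (π : Policy n m) (R : Set (Fin n)) : Prop :=
  R.Nonempty ∧ (∀ i ∈ R, ∀ j, 0 < M.P π i j → j ∈ R) ∧
    ∀ i ∈ R, ∀ j ∈ R, Relation.ReflTransGen (fun a b => 0 < M.P π a b) i j

/-- A state is recurrent for `π` if it belongs to some recurrent class of `π`. -/
def Recurrent (M : MDP n m) (π : Policy n m) (i : Fin n) : Prop :=
  ∃ R : Set (Fin n), M.IsRecClass π R ∧ i ∈ R

/-- A state is transient for `π` if it is not recurrent for `π`. -/
def Transient (M : MDP n m) (π : Policy n m) (i : Fin n) : Prop :=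
  ¬ M.Recurrent π i

/-- Assumption 1: `τ_t, τ_r ≥ 1` with `x_π(i) ≤ τ_t` for transient states and
`x_π(i) ≥ n / ((1-γ) τ_r)` for recurrent states, for every policy `π`. -/
def Ass1 (M : MDP n m) (τt τr : ℝ) : Prop :=
  1 ≤ τt ∧ 1 ≤ τr ∧
    (∀ π i, M.Transient π i → M.xPol π i ≤ τt) ∧
    (∀ π i, M.Recurrent π i → (n : ℝ) / ((1 - M.γ) * τr) ≤ M.xPol π i)

/-- Assumption 2: the state space is partitioned into a set of states transient for every
policy and a set of states recurrent for every policy. -/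
def Ass2 (M : MDP n m) : Prop :=
  ∃ 𝒯 ℛ : Set (Fin n), 𝒯 ∪ ℛ = Set.univ ∧ 𝒯 ∩ ℛ = ∅ ∧
    ∀ π : Policy n m, (∀ i ∈ 𝒯, M.Transient π i) ∧ (∀ i ∈ ℛ, M.Recurrent π i)

/-- The MDP is deterministic when every transition probability is 0 or 1. -/
def Deterministic (M : MDP n m) : Prop :=
  ∀ i a j, M.p i a j = 0 ∨ M.p i a j = 1

/-- `V_max = (max_π ‖r_π‖_∞) / (1 - γ)`. -/
noncomputable def Vmax (M : MDP n m) : ℝ :=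
  (⨆ π : Policy n m, ‖M.rPol π‖) / (1 - M.γ)

end MDP


section SimplexAux

open Finset

variable {n m : ℕ}

/-- Generic lemma: if `u = w + γ Q u` with `Q` row-stochastic and `w ≥ 0`, then `u ≥ 0`. -/
lemma sol_nonneg {γ : ℝ} {q : Fin n → Fin n → ℝ} {u w : Fin n → ℝ} [Nonempty (Fin n)]
    (hγ0 : 0 ≤ γ) (hγ1 : γ < 1)
    (hq0 : ∀ i j, 0 ≤ q i j) (hq1 : ∀ i, ∑ j, q i j = 1)
    (hu : ∀ i, u i = w i + γ * ∑ j, q i j * u j)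
    (hw : ∀ i, 0 ≤ w i) : ∀ i, 0 ≤ u i := by
  obtain ⟨i0, h0⟩ := Finite.exists_min u
  have hsum : u i0 ≤ ∑ j, q i0 j * u j := by
    calc u i0 = ∑ j, q i0 j * u i0 := by rw [← Finset.sum_mul, hq1, one_mul]
    _ ≤ ∑ j, q i0 j * u j :=
        Finset.sum_le_sum fun j _ => mul_le_mul_of_nonneg_left (h0 j) (hq0 i0 j)
  have h1 := hu i0
  have h2 := hw i0
  have h3 : 0 ≤ u i0 := by nlinarith [mul_le_mul_of_nonneg_left hsum hγ0]
  exact fun i => le_trans h3 (h0 i)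

lemma sol_ge {γ : ℝ} {q : Fin n → Fin n → ℝ} {u w : Fin n → ℝ}
    (hγ0 : 0 ≤ γ)
    (hq0 : ∀ i j, 0 ≤ q i j)
    (hu : ∀ i, u i = w i + γ * ∑ j, q i j * u j)
    (h0 : ∀ i, 0 ≤ u i) : ∀ i, w i ≤ u i := by
  intro i
  have hs : 0 ≤ ∑ j, q i j * u j :=
    Finset.sum_nonneg fun j _ => mul_nonneg (hq0 i j) (h0 j)
  nlinarith [hu i, mul_nonneg hγ0 hs]

lemma sol_max {γ : ℝ} {q : Fin n → Fin n → ℝ} {u w : Fin n → ℝ} [Nonempty (Fin n)]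
    (hγ0 : 0 ≤ γ) (hγ1 : γ < 1)
    (hq0 : ∀ i j, 0 ≤ q i j) (hq1 : ∀ i, ∑ j, q i j = 1)
    (hu : ∀ i, u i = w i + γ * ∑ j, q i j * u j) :
    ∃ i1, ∀ i, (1 - γ) * u i ≤ w i1 := by
  obtain ⟨i1, h1⟩ := Finite.exists_max u
  refine ⟨i1, fun i => ?_⟩
  have hsum : ∑ j, q i1 j * u j ≤ u i1 := by
    calc ∑ j, q i1 j * u j
        ≤ ∑ j, q i1 j * u i1 :=
          Finset.sum_le_sum fun j _ => mul_le_mul_of_nonneg_left (h1 j) (hq0 i1 j)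
    _ = u i1 := by rw [← Finset.sum_mul, hq1, one_mul]
  have h2 := hu i1
  have key : (1 - γ) * u i1 ≤ w i1 := by nlinarith [mul_le_mul_of_nonneg_left hsum hγ0]
  have h3 : (1 - γ) * u i ≤ (1 - γ) * u i1 :=
    mul_le_mul_of_nonneg_left (h1 i) (by linarith)
  linarith

namespace MDP

lemma Tpol_apply (M : MDP n m) (π : Policy n m) (v : Fin n → ℝ) (i : Fin n) :
    M.Tpol π v i = M.rPol π i + M.γ * ∑ j, M.p i (π i) j * v j := by
  simp [MDP.Tpol, MDP.P, Matrix.mulVec, dotProduct]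

lemma Tpol_congr (M : MDP n m) {π π' : Policy n m} (v : Fin n → ℝ) {i : Fin n}
    (h : π' i = π i) : M.Tpol π' v i = M.Tpol π v i := by
  simp [Tpol_apply, MDP.rPol, h]

lemma Tpol_mono (M : MDP n m) (π : Policy n m) {v w : Fin n → ℝ} (h : ∀ j, v j ≤ w j)
    (i : Fin n) : M.Tpol π v i ≤ M.Tpol π w i := by
  simp only [Tpol_apply]
  have : ∑ j, M.p i (π i) j * v j ≤ ∑ j, M.p i (π i) j * w j :=
    Finset.sum_le_sum fun j _ => mul_le_mul_of_nonneg_left (h j) (M.p_nonneg i (π i) j)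
  nlinarith [M.γ_pos]

/-- Bellman residual identity between two policies. -/
lemma residual (M : MDP n m) {V : Policy n m → Fin n → ℝ} (hV : M.IsValue V)
    (π' π : Policy n m) (i : Fin n) :
    V π' i - V π i = (M.Tpol π' (V π) i - V π i)
      + M.γ * ∑ j, M.p i (π' i) j * (V π' j - V π j) := by
  have h := congrFun (hV π') i
  rw [Tpol_apply] at h
  simp only [Tpol_apply, mul_sub, Finset.sum_sub_distrib]
  linarith [h]

/-- Bellman residual identity against the optimal value. -/
lemma residual_star (M : MDP n m) {V : Policy n m → Fin n → ℝ} (hV : M.IsValue V)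
    (π : Policy n m) (i : Fin n) :
    M.vStar V i - V π i = (M.vStar V i - M.Tpol π (M.vStar V) i)
      + M.γ * ∑ j, M.p i (π i) j * (M.vStar V j - V π j) := by
  have h := congrFun (hV π) i
  rw [Tpol_apply] at h
  simp only [Tpol_apply, mul_sub, Finset.sum_sub_distrib]
  linarith [h]

end MDP

end SimplexAux

set_option maxHeartbeats 2000000 in
/-- Simplex-PI terminates after at most
`n(m-1)⌈(n/(1-γ)) log(n/(1-γ))⌉` iterations. -/
theorem simplex_termination {n m : ℕ} (M : MDP n m)
    (V : MDP.Policy n m → Fin n → ℝ) (hV : M.IsValue V)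
    (π : ℕ → MDP.Policy n m) (K : ℕ)
    (hrun : ∀ k < K, ¬ M.IsOptimal V (π k) ∧ M.SimplexStep V (π k) (π (k + 1))) :
    (K : ℝ) ≤ (n : ℝ) * ((m : ℝ) - 1) *
      ((⌈((n : ℝ) / (1 - M.γ)) * Real.log ((n : ℝ) / (1 - M.γ))⌉ : ℤ) : ℝ) := by
  classical
  haveI : Nonempty (Fin n) := ⟨⟨0, M.n_pos⟩⟩
  haveI : Nonempty (Fin m) := ⟨⟨0, by have := M.m_ge_two; omega⟩⟩
  have hγ0 : 0 < M.γ := M.γ_pos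
  have hγ1 : M.γ < 1 := M.γ_lt_one
  have hn : (0:ℝ) < n := by exact_mod_cast M.n_pos
  have hn1 : (1:ℝ) ≤ n := by exact_mod_cast M.n_pos
  set vs : Fin n → ℝ := M.vStar V with hvs
  have hbdd : ∀ i : Fin n, BddAbove (Set.range fun σ : MDP.Policy n m => V σ i) :=
    fun i => (Set.finite_range _).bddAbove
  have hle_vs : ∀ (σ : MDP.Policy n m) (i : Fin n), V σ i ≤ vs i :=
    fun σ i => le_ciSup (f := fun τ : MDP.Policy n m => V τ i) (hbdd i) σ
  have hatt : ∀ i : Fin n, ∃ σ : MDP.Policy n m, vs i = V σ i := by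
    intro i
    obtain ⟨σ, hσ⟩ := Finite.exists_max fun τ : MDP.Policy n m => V τ i
    exact ⟨σ, le_antisymm (ciSup_le hσ) (hle_vs σ i)⟩
  have hTpol_le_T : ∀ (σ : MDP.Policy n m) (v : Fin n → ℝ) (i : Fin n),
      M.Tpol σ v i ≤ M.T v i :=
    fun σ v i => le_ciSup (f := fun τ : MDP.Policy n m => M.Tpol τ v i)
      ((Set.finite_range _).bddAbove) σ
  have hadv : ∀ (σ : MDP.Policy n m) (i : Fin n), V σ i ≤ M.T (V σ) i := by
    intro σ i
    calc V σ i = M.Tpol σ (V σ) i := congrFun (hV σ) i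
    _ ≤ M.T (V σ) i := hTpol_le_T σ (V σ) i
  set D : ℕ → ℝ := fun k => ∑ i, (vs i - V (π k) i) with hD
  have hD0 : ∀ k, 0 ≤ D k :=
    fun k => Finset.sum_nonneg fun i _ => by linarith [hle_vs (π k) i]
  have hDpos : ∀ k, k < K → 0 < D k := by
    intro k hk
    obtain ⟨i, hi⟩ := Function.ne_iff.mp (hrun k hk).1
    exact Finset.sum_pos' (fun i _ => by linarith [hle_vs (π k) i])
      ⟨i, Finset.mem_univ i, by have h1 := lt_of_le_of_ne (hle_vs (π k) i) hi; linarith⟩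
  -- Lemma A: per-state gap bound by max advantage
  have hGap : ∀ (σ : MDP.Policy n m) (α : ℝ),
      (∀ i, M.T (V σ) i - V σ i ≤ α) → ∀ i, (1 - M.γ) * (vs i - V σ i) ≤ α := by
    intro σ α hα i
    obtain ⟨τ, hτ⟩ := hatt i
    obtain ⟨i1, h1⟩ := sol_max (u := fun j => V τ j - V σ j)
      (w := fun j => M.Tpol τ (V σ) j - V σ j)
      hγ0.le hγ1 (fun j l => M.p_nonneg j (τ j) l) (fun j => M.p_sum j (τ j))
      (fun j => M.residual hV τ σ j)
    have h2 : M.Tpol τ (V σ) i1 - V σ i1 ≤ α := by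
      have := hTpol_le_T τ (V σ) i1
      have := hα i1
      linarith
    have h3 := h1 i
    rw [hτ]
    linarith
  set c : ℝ := 1 - (1 - M.γ)/n with hc
  have hfrac : 0 < (1 - M.γ)/n := div_pos (by linarith) hn
  have hfrac1 : (1 - M.γ)/n ≤ 1 := by
    rw [div_le_one hn]; linarith
  have hc0 : 0 ≤ c := by rw [hc]; linarith
  have hc1 : c < 1 := by rw [hc]; linarith
  -- contraction
  have hcontract : ∀ k, k < K → D (k+1) ≤ c * D k := by
    intro k hk
    obtain ⟨s, hagree, hmax, hach⟩ := (hrun k hk).2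
    set α : ℝ := M.T (V (π k)) s - V (π k) s with hα
    have hα0 : 0 ≤ α := by have := hadv (π k) s; rw [hα]; linarith
    have hw0 : ∀ j, 0 ≤ M.Tpol (π (k+1)) (V (π k)) j - V (π k) j := by
      intro j
      by_cases hj : j = s
      · subst hj; rw [hach]; exact hα0
      · rw [M.Tpol_congr (V (π k)) (hagree j hj), ← congrFun (hV (π k)) j]
        simp
    have hu0 : ∀ j, 0 ≤ V (π (k+1)) j - V (π k) j :=
      sol_nonneg (u := fun j => V (π (k+1)) j - V (π k) j)
        (w := fun j => M.Tpol (π (k+1)) (V (π k)) j - V (π k) j)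
        hγ0.le hγ1 (fun j l => M.p_nonneg j (π (k+1) j) l) (fun j => M.p_sum j (π (k+1) j))
        (fun j => M.residual hV (π (k+1)) (π k) j) hw0
    have huw : ∀ j, M.Tpol (π (k+1)) (V (π k)) j - V (π k) j ≤ V (π (k+1)) j - V (π k) j :=
      sol_ge (u := fun j => V (π (k+1)) j - V (π k) j)
        (w := fun j => M.Tpol (π (k+1)) (V (π k)) j - V (π k) j)
        hγ0.le (fun j l => M.p_nonneg j (π (k+1) j) l)
        (fun j => M.residual hV (π (k+1)) (π k) j) hu0
    have hsumw : ∑ j, (M.Tpol (π (k+1)) (V (π k)) j - V (π k) j) = α := by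
      rw [Finset.sum_eq_single s]
      · rw [hach]
      · intro j _ hj
        rw [M.Tpol_congr (V (π k)) (hagree j hj), ← congrFun (hV (π k)) j]; ring
      · intro h; exact absurd (Finset.mem_univ s) h
    have himp : α ≤ ∑ j, (V (π (k+1)) j - V (π k) j) := by
      rw [← hsumw]; exact Finset.sum_le_sum fun j _ => huw j
    have hgap : (1 - M.γ) * D k ≤ (n : ℝ) * α := by
      have hA := hGap (π k) α (by intro i; exact hmax i)
      calc (1 - M.γ) * D k = ∑ i, (1 - M.γ) * (vs i - V (π k) i) := by
            rw [hD]; simp only; rw [Finset.mul_sum]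
      _ ≤ ∑ _i : Fin n, α := Finset.sum_le_sum fun i _ => hA i
      _ = (n : ℝ) * α := by rw [Finset.sum_const, Finset.card_univ, Fintype.card_fin,
            nsmul_eq_mul]
    have hDk1 : D (k+1) = D k - ∑ j, (V (π (k+1)) j - V (π k) j) := by
      rw [hD]; simp only; rw [← Finset.sum_sub_distrib]
      exact Finset.sum_congr rfl fun i _ => by ring
    have halow : (1 - M.γ)/n * D k ≤ α := by
      rw [div_mul_eq_mul_div, div_le_iff₀ hn]; nlinarith
    rw [hDk1, hc]
    nlinarith
  have hiter : ∀ k j, k + j ≤ K → D (k + j) ≤ c ^ j * D k := by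
    intro k j
    induction j with
    | zero => intro _; simp
    | succ j ih =>
      intro h
      have h1 : k + j < K := by omega
      have h2 := hcontract (k + j) h1
      have h3 := ih (by omega)
      have h4 : k + (j + 1) = (k + j) + 1 := by omega
      rw [h4]
      calc D ((k+j)+1) ≤ c * D (k+j) := h2
      _ ≤ c * (c ^ j * D k) := mul_le_mul_of_nonneg_left h3 hc0
      _ = c ^ (j+1) * D k := by ring
  -- bad states
  have hbad : ∀ k, ∃ sb : Fin n, k < K →
      (1 - M.γ)/n * D k ≤ vs sb - M.Tpol (π k) vs sb := by
    intro k
    by_cases hk : k < K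
    · obtain ⟨i1, h1⟩ := sol_max (u := fun i => vs i - V (π k) i)
        (w := fun i => vs i - M.Tpol (π k) vs i)
        hγ0.le hγ1 (fun j l => M.p_nonneg j (π k j) l) (fun j => M.p_sum j (π k j))
        (fun i => M.residual_star hV (π k) i)
      refine ⟨i1, fun _ => ?_⟩
      have h2 : (1 - M.γ) * D k ≤ (n:ℝ) * (vs i1 - M.Tpol (π k) vs i1) := by
        calc (1 - M.γ) * D k = ∑ i, (1 - M.γ) * (vs i - V (π k) i) := by
              rw [hD]; simp only; rw [Finset.mul_sum]
        _ ≤ ∑ _i : Fin n, (vs i1 - M.Tpol (π k) vs i1) :=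
              Finset.sum_le_sum fun i _ => h1 i
        _ = (n:ℝ) * _ := by rw [Finset.sum_const, Finset.card_univ, Fintype.card_fin,
              nsmul_eq_mul]
      rw [div_mul_eq_mul_div, div_le_iff₀ hn]; linarith
    · exact ⟨Classical.arbitrary _, fun h => absurd h hk⟩
  choose sb hsb using hbad
  -- persistence
  have hpersist : ∀ (k k' : ℕ) (s : Fin n), π k' s = π k s →
      vs s - M.Tpol (π k) vs s ≤ D k' := by
    intro k k' s hss
    have hu0 : ∀ i, 0 ≤ vs i - V (π k') i := fun i => by linarith [hle_vs (π k') i]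
    have huw := sol_ge (u := fun i => vs i - V (π k') i)
      (w := fun i => vs i - M.Tpol (π k') vs i)
      hγ0.le (fun j l => M.p_nonneg j (π k' j) l)
      (fun i => M.residual_star hV (π k') i) hu0
    have h1 := huw s
    rw [M.Tpol_congr vs hss] at h1
    calc vs s - M.Tpol (π k) vs s ≤ vs s - V (π k') s := h1
    _ ≤ D k' := by
        rw [hD]; simp only
        exact Finset.single_le_sum (fun i _ => hu0 i) (Finset.mem_univ s)
  -- analytic facts
  set x : ℝ := (n:ℝ)/(1 - M.γ) with hx
  have h1γ : 0 < 1 - M.γ := by linarith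
  have hx1 : 1 < x := by
    rw [hx, lt_div_iff₀ h1γ]; nlinarith
  have hxpos : 0 < x := by linarith
  have hxlog : 0 < Real.log x := Real.log_pos hx1
  have hNz1 : 1 ≤ ⌈x * Real.log x⌉ := Int.ceil_pos.mpr (by positivity)
  set Nz : ℤ := ⌈x * Real.log x⌉ with hNzd
  set N : ℕ := Nz.toNat with hNd
  have hNpos : 0 < N := by omega
  have hNcast : (N:ℝ) = (Nz:ℝ) := by
    have : ((N:ℤ):ℝ) = (Nz:ℝ) := by rw [hNd, Int.toNat_of_nonneg (by omega)]
    exact_mod_cast this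
  have hNge : x * Real.log x ≤ (N:ℝ) := by rw [hNcast]; exact Int.le_ceil _
  have hinvx : (1 - M.γ)/(n:ℝ) = 1/x := by
    rw [hx]; field_simp
  have hkey : c ^ N < 1/x := by
    have hcx : c = 1 - 1/x := by rw [hc, hinvx]
    have h1 : c < Real.exp (-(1/x)) := by
      have h0x : (0:ℝ) < 1/x := by positivity
      have hne : -(1/x) ≠ (0:ℝ) := by
        intro hcontra
        rw [neg_eq_zero] at hcontra
        linarith
      have h := Real.add_one_lt_exp hne
      rw [hcx]; linarith
    have h2 : c ^ N < Real.exp (-(1/x)) ^ N :=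
      pow_lt_pow_left₀ h1 hc0 (by omega)
    have h3 : Real.exp (-(1/x)) ^ N = Real.exp (-((N:ℝ)/x)) := by
      rw [← Real.exp_nat_mul]; congr 1; ring
    have h4 : Real.exp (-((N:ℝ)/x)) ≤ Real.exp (-Real.log x) := by
      apply Real.exp_le_exp.mpr
      rw [neg_le_neg_iff, le_div_iff₀ hxpos]; nlinarith
    have h5 : Real.exp (-Real.log x) = 1/x := by
      rw [Real.exp_neg, Real.exp_log hxpos, one_div]
    rw [h3] at h2; rw [h5] at h4; linarith
  -- counting
  set Q : Fin n → Fin m → ℝ :=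
    fun s a => (∑ j, M.p s a j * M.r s a j) + M.γ * ∑ j, M.p s a j * vs j with hQ
  have hTQ : ∀ (σ : MDP.Policy n m) (s : Fin n), M.Tpol σ vs s = Q s (σ s) := by
    intro σ s; rw [M.Tpol_apply, hQ]; simp [MDP.rPol]
  have hgood : ∀ s : Fin n, ∃ a : Fin m, vs s ≤ Q s a := by
    intro s
    obtain ⟨σ, hσ⟩ := hatt s
    refine ⟨σ s, ?_⟩
    have h1 : M.Tpol σ (V σ) s ≤ M.Tpol σ vs s := M.Tpol_mono σ (fun j => hle_vs σ j) s
    rw [hTQ] at h1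
    rw [hσ, congrFun (hV σ) s]
    exact h1
  set T2 : Finset ((_ : Fin n) × Fin m) :=
    Finset.univ.sigma (fun s => Finset.univ.filter (fun a => Q s a < vs s)) with hT2
  have hT2card : T2.card ≤ n * (m - 1) := by
    rw [hT2, Finset.card_sigma]
    have hfib : ∀ s : Fin n, (Finset.univ.filter (fun a => Q s a < vs s)).card ≤ m - 1 := by
      intro s
      obtain ⟨a0, ha0⟩ := hgood s
      have hsub : Finset.univ.filter (fun a => Q s a < vs s) ⊆ Finset.univ.erase a0 := by
        intro a ha
        simp only [Finset.mem_filter, Finset.mem_univ, true_and] at ha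
        refine Finset.mem_erase.mpr ⟨?_, Finset.mem_univ a⟩
        rintro rfl; linarith
      calc (Finset.univ.filter (fun a => Q s a < vs s)).card
          ≤ (Finset.univ.erase a0).card := Finset.card_le_card hsub
      _ = m - 1 := by
          rw [Finset.card_erase_of_mem (Finset.mem_univ a0), Finset.card_univ,
            Fintype.card_fin]
    calc ∑ s : Fin n, (Finset.univ.filter (fun a => Q s a < vs s)).card
        ≤ ∑ _s : Fin n, (m - 1) := Finset.sum_le_sum fun s _ => hfib s
    _ = n * (m - 1) := by rw [Finset.sum_const, Finset.card_univ, Fintype.card_fin,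
          smul_eq_mul]
  by_contra hcon
  push_neg at hcon
  have hRHS : ((n * (m-1) * N : ℕ) : ℝ) = (n:ℝ) * ((m:ℝ) - 1) * ((Nz : ℤ) : ℝ) := by
    push_cast [Nat.cast_sub (by have := M.m_ge_two; omega : 1 ≤ m)]
    rw [hNcast]
  have hKgt : n * (m-1) * N < K := by
    have h := hcon
    rw [← hRHS] at h
    exact_mod_cast h
  have hjN : ∀ j, j ≤ n * (m-1) → j * N < K := fun j hj =>
    lt_of_le_of_lt (Nat.mul_le_mul_right N hj) hKgt
  set g : ℕ → ((_ : Fin n) × Fin m) := fun j => ⟨sb (j*N), π (j*N) (sb (j*N))⟩ with hg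
  have hmem : ∀ j ∈ Finset.range (n * (m-1) + 1), g j ∈ T2 := by
    intro j hj
    rw [Finset.mem_range] at hj
    have hjK : j * N < K := hjN j (by omega)
    have h1 := hsb (j*N) hjK
    have h2 : 0 < vs (sb (j*N)) - M.Tpol (π (j*N)) vs (sb (j*N)) :=
      lt_of_lt_of_le (mul_pos hfrac (hDpos _ hjK)) h1
    rw [hg, hT2]
    simp only [Finset.mem_sigma, Finset.mem_univ, Finset.mem_filter, true_and]
    rw [← hTQ]
    linarith
  have hinj : Set.InjOn g ↑(Finset.range (n * (m-1) + 1)) := by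
    have main : ∀ j j', j ∈ Finset.range (n * (m-1) + 1) →
        j' ∈ Finset.range (n * (m-1) + 1) → j < j' → g j ≠ g j' := by
      intro j j' hj hj' hlt heq
      rw [Finset.mem_range] at hj hj'
      have hjK : j * N < K := hjN j (by omega)
      have hjK' : j' * N < K := hjN j' (by omega)
      rw [hg] at heq
      simp only [Sigma.mk.inj_iff] at heq
      obtain ⟨hs, ha⟩ := heq
      have ha' : π (j'*N) (sb (j*N)) = π (j*N) (sb (j*N)) := by
        have ha2 := eq_of_heq ha
        rw [← hs] at ha2
        exact ha2.symm
      have hp : vs (sb (j*N)) - M.Tpol (π (j*N)) vs (sb (j*N)) ≤ D (j'*N) :=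
        hpersist (j*N) (j'*N) (sb (j*N)) ha'
      have hlow : (1 - M.γ)/n * D (j*N) ≤ D (j'*N) := le_trans (hsb (j*N) hjK) hp
      have hmulN : j * N + N ≤ j' * N := by
        have h6 : (j+1) * N ≤ j' * N := Nat.mul_le_mul_right N (by omega)
        have h6' : (j+1) * N = j * N + N := by ring
        omega
      have h7 : j*N + (j'*N - j*N) = j'*N := by omega
      have h8 := hiter (j*N) (j'*N - j*N) (by omega)
      rw [h7] at h8
      have h9 : c ^ (j'*N - j*N) ≤ c ^ N :=
        pow_le_pow_of_le_one hc0 hc1.le (by omega)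
      have h10 : D (j'*N) ≤ c ^ N * D (j*N) :=
        le_trans h8 (mul_le_mul_of_nonneg_right h9 (hD0 _))
      have hDj : 0 < D (j*N) := hDpos _ hjK
      have h11 : c ^ N * D (j*N) < 1/x * D (j*N) := mul_lt_mul_of_pos_right hkey hDj
      rw [hinvx] at hlow
      linarith
    intro a ha b hb hab
    rcases lt_trichotomy a b with h | h | h
    · exact absurd hab (main a b (by simpa using ha) (by simpa using hb) h)
    · exact h
    · exact absurd hab.symm (main b a (by simpa using hb) (by simpa using ha) h)
  have hcard := Finset.card_le_card_of_injOn g hmem hinj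
  rw [Finset.card_range] at hcard
  omega
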